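/- arXiv:2005.10403 — 3 statements merged into one kernel-verified Lean document; each statement's English description precedes it below -/
import Mathlib

section
/- Let α > 0 be a non-integer real number, let [[α]] denote the largest integer strictly smaller than α and {{α}} := α − [[α]] ∈ (0,1]. Suppose f : ℝ → ℂ is continuous and integrable, and there is a constant C > 0 such that its Fourier transform f̂(ξ) = ∫_ℝ f(t) e^{−iξt} dt satisfies |f̂(ξ)| ≤ C/|ξ|^{α+1} for all ξ ≠ 0. Then f is [[α]] times differentiable on ℝ, every derivative f^{(m)} with 0 ≤ m ≤ [[α]] is bounded on ℝ, and there exists a constant A > 0 such that |f^{([[α]])}(s) − f^{([[α]])}(t)| ≤ A·|s − t|^{{{α}}} for all s, t ∈ ℝ; that is, f belongs to the Lipschitz class Lip(α, ℝ). -/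
open MeasureTheory Set Filter
open scoped FourierTransform Real

/-- The Fourier transform `f̂(ξ) = ∫ f(t) e^{-iξt} dt`. -/
noncomputable def fourierT (f : ℝ → ℂ) (ξ : ℝ) : ℂ :=
  ∫ t : ℝ, f t * Complex.exp (-Complex.I * ξ * t)

namespace FourierLipAux

lemma norm_exp_mul_I_sub_one_le (θ : ℝ) :
    ‖Complex.exp (θ * Complex.I) - 1‖ ≤ min 2 (2 * |θ|) := by
  have h2 : ‖Complex.exp (θ * Complex.I) - 1‖ ≤ 2 := by
    calc ‖Complex.exp (θ * Complex.I) - 1‖ ≤ ‖Complex.exp (θ * Complex.I)‖ + ‖(1:ℂ)‖ :=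
          norm_sub_le _ _
      _ = 2 := by
          rw [Complex.norm_exp_ofReal_mul_I, norm_one]; norm_num
  rcases le_total |θ| 1 with h | h
  · refine le_min h2 ?_
    have : ‖(θ : ℂ) * Complex.I‖ ≤ 1 := by
      rwa [norm_mul, Complex.norm_I, Complex.norm_real, mul_one, Real.norm_eq_abs]
    have := Complex.norm_exp_sub_one_le this
    rwa [norm_mul, Complex.norm_I, Complex.norm_real, mul_one, Real.norm_eq_abs] at this
  · rw [min_eq_left (by linarith)]
    exact h2

lemma char_diff_le (a b : ℝ) :
    ‖((Real.fourierChar a : Circle) : ℂ) - ((Real.fourierChar b : Circle) : ℂ)‖ ≤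
      min 2 (2 * (2 * π * |a - b|)) := by
  have key : ((Real.fourierChar a : Circle) : ℂ) - ((Real.fourierChar b : Circle) : ℂ)
      = ((Real.fourierChar b : Circle) : ℂ) *
        (Complex.exp ((2 * π * (a - b) : ℝ) * Complex.I) - 1) := by
    rw [Real.fourierChar_apply, Real.fourierChar_apply, mul_sub, mul_one, ← Complex.exp_add]
    push_cast
    ring_nf
  rw [key, norm_mul]
  have hb : ‖((Real.fourierChar b : Circle) : ℂ)‖ = 1 := by
    rw [Real.fourierChar_apply]
    exact_mod_cast Complex.norm_exp_ofReal_mul_I _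
  rw [hb, one_mul]
  refine (norm_exp_mul_I_sub_one_le _).trans (le_of_eq ?_)
  congr 1
  rw [abs_mul, abs_mul, abs_of_pos Real.pi_pos]
  norm_num

lemma integrableOn_abs_rpow_Iic {p R : ℝ} (hp : p < -1) (hR : 0 < R) :
    IntegrableOn (fun x : ℝ => |x| ^ p) (Iic (-R)) := by
  have m : MeasurableEmbedding fun x : ℝ => -x := (Homeomorph.neg ℝ).measurableEmbedding
  rw [← Measure.map_neg_eq_self (volume : Measure ℝ), m.integrableOn_map_iff]
  simp only [Function.comp_def, abs_neg, neg_preimage, neg_Iic, neg_neg]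
  rw [integrableOn_Ici_iff_integrableOn_Ioi]
  exact (integrableOn_Ioi_rpow_of_lt hp hR).congr_fun
    (fun x hx => by rw [abs_of_pos (hR.trans hx)]) measurableSet_Ioi

lemma integral_abs_rpow_Iic {p R : ℝ} (hp : p < -1) (hR : 0 < R) :
    ∫ x in Iic (-R), |x| ^ p = -R ^ (p + 1) / (p + 1) := by
  have h := integral_comp_neg_Iic (-R) (fun x : ℝ => |x| ^ p)
  simp only [abs_neg, neg_neg] at h
  rw [h, setIntegral_congr_fun measurableSet_Ioi
    (fun x hx => by rw [abs_of_pos (hR.trans hx)] : EqOn _ (fun x : ℝ => x ^ p) _)]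
  exact integral_Ioi_rpow_of_lt hp hR

lemma integrableOn_abs_rpow_Ioc {p R : ℝ} (hp : -1 < p) (hR : 0 < R) :
    IntegrableOn (fun x : ℝ => |x| ^ p) (Ioc (-R) R) := by
  have hpos : IntegrableOn (fun x : ℝ => |x| ^ p) (Ioc 0 R) := by
    have h := intervalIntegral.intervalIntegrable_rpow' (a := 0) (b := R) hp
    rw [intervalIntegrable_iff_integrableOn_Ioc_of_le hR.le] at h
    exact h.congr_fun (fun x hx => by rw [abs_of_pos hx.1]) measurableSet_Ioc
  have m : MeasurableEmbedding fun x : ℝ => -x := (Homeomorph.neg ℝ).measurableEmbedding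
  have hneg : IntegrableOn (fun x : ℝ => |x| ^ p) (Ioc (-R) 0) := by
    rw [← Measure.map_neg_eq_self (volume : Measure ℝ), m.integrableOn_map_iff]
    simp only [Function.comp_def, abs_neg, neg_preimage, neg_Ioc, neg_neg, neg_zero]
    rw [integrableOn_Ico_iff_integrableOn_Ioo]
    exact hpos.mono_set Ioo_subset_Ioc_self
  have := hneg.union hpos
  rwa [Set.Ioc_union_Ioc_eq_Ioc (by linarith) hR.le] at this

lemma integral_abs_rpow_Ioc {p R : ℝ} (hp : -1 < p) (hR : 0 < R) :
    ∫ x in Ioc (-R) R, |x| ^ p = 2 * (R ^ (p + 1) / (p + 1)) := by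
  have hpos : IntegrableOn (fun x : ℝ => |x| ^ p) (Ioc 0 R) := by
    have h := intervalIntegral.intervalIntegrable_rpow' (a := 0) (b := R) hp
    rw [intervalIntegrable_iff_integrableOn_Ioc_of_le hR.le] at h
    exact h.congr_fun (fun x hx => by rw [abs_of_pos hx.1]) measurableSet_Ioc
  have m : MeasurableEmbedding fun x : ℝ => -x := (Homeomorph.neg ℝ).measurableEmbedding
  have hneg : IntegrableOn (fun x : ℝ => |x| ^ p) (Ioc (-R) 0) := by
    rw [← Measure.map_neg_eq_self (volume : Measure ℝ), m.integrableOn_map_iff]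
    simp only [Function.comp_def, abs_neg, neg_preimage, neg_Ioc, neg_neg, neg_zero]
    rw [integrableOn_Ico_iff_integrableOn_Ioo]
    exact hpos.mono_set Ioo_subset_Ioc_self
  have hIpos : ∫ x in Ioc 0 R, |x| ^ p = R ^ (p + 1) / (p + 1) := by
    rw [setIntegral_congr_fun measurableSet_Ioc
      (fun x hx => by rw [abs_of_pos hx.1] : EqOn _ (fun x : ℝ => x ^ p) _),
      ← intervalIntegral.integral_of_le hR.le, integral_rpow (Or.inl hp),
      Real.zero_rpow (by linarith), sub_zero]
  have hIneg : ∫ x in Ioc (-R) 0, |x| ^ p = R ^ (p + 1) / (p + 1) := by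
    have h := m.setIntegral_map (μ := volume) (fun x : ℝ => |x| ^ p) (Ioc (-R) 0)
    rw [Measure.map_neg_eq_self (volume : Measure ℝ)] at h
    rw [h]
    simp only [abs_neg, neg_preimage, neg_Ioc, neg_neg, neg_zero]
    rw [MeasureTheory.integral_Ico_eq_integral_Ioo, ← MeasureTheory.integral_Ioc_eq_integral_Ioo]
    exact hIpos
  rw [← Set.Ioc_union_Ioc_eq_Ioc (by linarith : -R ≤ 0) hR.le,
    setIntegral_union (Set.Ioc_disjoint_Ioc_of_le le_rfl) measurableSet_Ioc hneg hpos, hIneg, hIpos]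
  ring

lemma integrable_of_decay {u : ℝ → ℂ} (hu : AEStronglyMeasurable u volume) {M c p : ℝ}
    (hp : p < -1) (hM : ∀ x : ℝ, |x| ≤ 1 → ‖u x‖ ≤ M)
    (hc : ∀ x : ℝ, 1 ≤ |x| → ‖u x‖ ≤ c * |x| ^ p) :
    Integrable u := by
  rw [← integrableOn_univ, ← Set.Iic_union_Ioi (a := (1:ℝ)),
    ← Set.Iic_union_Ioc_eq_Iic (by norm_num : (-1:ℝ) ≤ 1)]
  refine IntegrableOn.union (IntegrableOn.union ?_ ?_) ?_
  · refine Integrable.mono' ((integrableOn_abs_rpow_Iic hp one_pos).const_mul c) hu.restrict ?_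
    filter_upwards [ae_restrict_mem measurableSet_Iic] with x hx
    exact hc x (le_abs.mpr (Or.inr (by linarith [mem_Iic.mp hx])))
  · apply Measure.integrableOn_of_bounded (M := M) (by simp [Real.volume_Ioc]) hu
    filter_upwards [ae_restrict_mem measurableSet_Ioc] with x hx
    exact hM x (abs_le.mpr ⟨by linarith [hx.1], hx.2⟩)
  · refine Integrable.mono' ((integrableOn_Ioi_rpow_of_lt hp one_pos).const_mul c)
      hu.restrict ?_
    filter_upwards [ae_restrict_mem measurableSet_Ioi] with x hx
    have hx1 : (1:ℝ) ≤ x := le_of_lt hx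
    have := hc x (by rwa [abs_of_pos (by linarith)])
    rwa [abs_of_pos (by linarith : (0:ℝ) < x)] at this

lemma fourierT_eq (f : ℝ → ℂ) (w : ℝ) : fourierT f (2 * π * w) = 𝓕 f w := by
  rw [Real.fourier_real_eq_integral_exp_smul]
  unfold fourierT
  congr 1
  funext t
  rw [smul_eq_mul, mul_comm]
  congr 1
  push_cast
  ring_nf

end FourierLipAux

open FourierLipAux

/-- If `f : ℝ → ℂ` is continuous and integrable and its Fourier transform
decays like `C/|ξ|^{α+1}` for a non-integer `α > 0`, then `f ∈ Lip(α, ℝ)`: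
`f` has derivatives up to order `[[α]] = ⌊α⌋`, these are bounded on `ℝ`, and the
`⌊α⌋`-th derivative is Hölder of order `{{α}} = α - ⌊α⌋`. -/
theorem fourier_decay_implies_Lip
    (α : ℝ) (hα : 0 < α) (hαnotint : ∀ n : ℤ, α ≠ (n : ℝ))
    (f : ℝ → ℂ) (hfc : Continuous f) (hfi : Integrable f)
    (C : ℝ) (hC : 0 < C)
    (hFT : ∀ ξ : ℝ, ξ ≠ 0 → ‖fourierT f ξ‖ ≤ C / |ξ| ^ (α + 1)) :
    (∀ m : ℕ, m < ⌊α⌋.toNat → Differentiable ℝ (iteratedDeriv m f)) ∧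
    (∀ m : ℕ, m ≤ ⌊α⌋.toNat → ∃ B : ℝ, ∀ t : ℝ, ‖iteratedDeriv m f t‖ ≤ B) ∧
    (∃ A : ℝ, 0 < A ∧ ∀ s t : ℝ,
      ‖iteratedDeriv ⌊α⌋.toNat f s - iteratedDeriv ⌊α⌋.toNat f t‖ ≤
        A * |s - t| ^ (α - (⌊α⌋.toNat : ℝ))) := by
  set k := ⌊α⌋.toNat with hkdef
  have h2π : (0:ℝ) < 2 * π := by positivity
  -- basic facts about k and α
  have hk0 : (0:ℤ) ≤ ⌊α⌋ := Int.floor_nonneg.mpr hα.le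
  have hkcast : ((k : ℤ) : ℝ) = ((⌊α⌋ : ℤ) : ℝ) := by
    rw [hkdef, Int.toNat_of_nonneg hk0]
  have hkα : (k : ℝ) < α := by
    have h1 : ((⌊α⌋ : ℤ) : ℝ) ≤ α := Int.floor_le α
    have h2 : α ≠ ((⌊α⌋ : ℤ) : ℝ) := hαnotint ⌊α⌋
    have : ((k : ℤ) : ℝ) = (k : ℝ) := by push_cast; ring
    rw [← this, hkcast]
    exact lt_of_le_of_ne h1 (Ne.symm h2)
  have hαk1 : α < k + 1 := by
    have h1 : α < ((⌊α⌋ : ℤ) : ℝ) + 1 := Int.lt_floor_add_one α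
    have : ((k : ℤ) : ℝ) = (k : ℝ) := by push_cast; ring
    rw [← this, hkcast] at *
    linarith
  have hβ0 : 0 < α - (k : ℝ) := by linarith
  have hβ1 : α - (k : ℝ) < 1 := by linarith
  -- the Fourier transform g = 𝓕 f and its reflection h
  set M : ℝ := ∫ t : ℝ, ‖f t‖ with hMdef
  set c : ℝ := C * (2 * π) ^ (-(α + 1)) with hcdef
  have hc0 : 0 < c := by
    rw [hcdef]; positivity
  have hgc : Continuous (𝓕 f) :=
    VectorFourier.fourierIntegral_continuous Real.continuous_fourierChar
      (by exact continuous_inner) hfi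
  have hgM : ∀ w : ℝ, ‖𝓕 f w‖ ≤ M := fun w =>
    VectorFourier.norm_fourierIntegral_le_integral_norm _ _ _ _ _
  have hgd : ∀ w : ℝ, w ≠ 0 → ‖𝓕 f w‖ ≤ c * |w| ^ (-(α + 1)) := by
    intro w hw
    have h2 := hFT (2 * π * w) (mul_ne_zero (ne_of_gt h2π) hw)
    rw [fourierT_eq f w] at h2
    refine h2.trans (le_of_eq ?_)
    rw [abs_mul, abs_of_pos h2π, Real.mul_rpow h2π.le (abs_nonneg w), div_eq_mul_inv,
      mul_inv, hcdef, Real.rpow_neg h2π.le, Real.rpow_neg (abs_nonneg w)]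
    ring
  set h : ℝ → ℂ := fun x => 𝓕 f (-x) with hhdef
  have hhc : Continuous h := hgc.comp continuous_neg
  have hhM : ∀ x : ℝ, ‖h x‖ ≤ M := fun x => hgM (-x)
  have hhd : ∀ x : ℝ, x ≠ 0 → ‖h x‖ ≤ c * |x| ^ (-(α + 1)) := by
    intro x hx
    have := hgd (-x) (neg_ne_zero.mpr hx)
    rwa [abs_neg] at this
  have hM0 : 0 ≤ M := integral_nonneg fun t => norm_nonneg _
  -- integrability of x^n • h x for n ≤ k
  have hint : ∀ n : ℕ, n ≤ k → Integrable (fun x : ℝ => x ^ n • h x) := by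
    intro n hn
    have hp : (k : ℝ) - α - 1 < -1 := by linarith
    refine integrable_of_decay (M := M) (c := c) ?_ hp ?_ ?_
    · exact ((continuous_pow n).smul hhc).aestronglyMeasurable
    · intro x hx
      calc ‖x ^ n • h x‖ = |x| ^ n * ‖h x‖ := by
            rw [norm_smul, Real.norm_eq_abs, abs_pow]
        _ ≤ 1 * M := by
            refine mul_le_mul (pow_le_one₀ (abs_nonneg x) hx) (hhM x) (norm_nonneg _) zero_le_one
        _ = M := one_mul M
    · intro x hx
      have hx0 : x ≠ 0 := by
        intro h0; rw [h0, abs_zero] at hx; linarith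
      have habs : (0:ℝ) < |x| := lt_of_lt_of_le one_pos hx
      calc ‖x ^ n • h x‖ = |x| ^ n * ‖h x‖ := by
            rw [norm_smul, Real.norm_eq_abs, abs_pow]
        _ ≤ |x| ^ k * (c * |x| ^ (-(α + 1))) :=
            mul_le_mul (pow_le_pow_right₀ hx hn) (hhd x hx0) (norm_nonneg _) (by positivity)
        _ = c * |x| ^ ((k : ℝ) - α - 1) := by
            rw [← Real.rpow_natCast |x| k, ← mul_assoc, mul_comm (|x| ^ (k:ℝ)) c, mul_assoc,
              ← Real.rpow_add habs]
            congr 2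
            ring
  -- integrability of 𝓕 f
  have hgint : Integrable (𝓕 f) := by
    refine integrable_of_decay (M := M) (c := c) hgc.aestronglyMeasurable
      (by linarith : -(α + 1) < -1) (fun x _ => hgM x) ?_
    intro x hx
    exact hgd x (fun h0 => by rw [h0, abs_zero] at hx; linarith)
  -- inversion: f = 𝓕 h
  have hf_eq : f = 𝓕 h := by
    have h1 := hfc.fourierInv_fourier_eq hfi hgint
    rw [← h1, Real.fourierInv_eq_fourier_comp_neg]
  -- iterated derivatives
  have hderiv : ∀ n : ℕ, n ≤ k →
      iteratedDeriv n f = 𝓕 (fun x : ℝ => (-2 * ↑π * Complex.I * ↑x) ^ n • h x) := by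
    intro n hn
    rw [hf_eq]
    exact Real.iteratedDeriv_fourier (N := (k : ℕ∞))
      (fun m hm => hint m (by exact_mod_cast hm)) (by exact_mod_cast hn)
  -- integrability of (-2πIx)^n • h x
  have key : ∀ n : ℕ, n ≤ k →
      Integrable (fun x : ℝ => (-2 * ↑π * Complex.I * ↑x) ^ n • h x) := by
    intro n hn
    refine ((hint n hn).smul ((-2 * ↑π * Complex.I) ^ n)).congr
      (Eventually.of_forall fun x => ?_)
    show ((-2 * ↑π * Complex.I) ^ n) • (x ^ n • h x) = (-2 * ↑π * Complex.I * ↑x) ^ n • h x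
    simp only [smul_eq_mul, Complex.real_smul]
    push_cast
    ring
  refine ⟨?_, ?_, ?_⟩
  · -- differentiability
    intro m hm
    rw [hderiv m hm.le]
    intro w
    have hF : Integrable (fun x : ℝ => (-2 * ↑π * Complex.I * ↑x) ^ m • h x) := key m hm.le
    have hF' : Integrable (fun x : ℝ =>
        x • ((-2 * ↑π * Complex.I * ↑x) ^ m • h x)) := by
      refine ((hint (m + 1) hm).smul ((-2 * ↑π * Complex.I) ^ m)).congr
        (Eventually.of_forall fun x => ?_)
      show ((-2 * ↑π * Complex.I) ^ m) • (x ^ (m+1) • h x)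
          = x • ((-2 * ↑π * Complex.I * ↑x) ^ m • h x)
      simp only [smul_eq_mul, Complex.real_smul]
      push_cast
      ring
    exact (Real.hasDerivAt_fourier hF hF' w).differentiableAt
  · -- boundedness
    intro m hm
    rw [hderiv m hm]
    exact ⟨∫ x : ℝ, ‖(-2 * ↑π * Complex.I * ↑x) ^ m • h x‖, fun t =>
      VectorFourier.norm_fourierIntegral_le_integral_norm _ _ _ _ _⟩
  · -- Hölder estimate
    set β : ℝ := α - (k : ℝ) with hβdef
    set c2 : ℝ := (2 * π) ^ k * c with hc2def
    have hc20 : 0 < c2 := by rw [hc2def]; positivity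
    refine ⟨8 * π * c2 * (2 * π) ^ (β - 1) / (1 - β) + 4 * c2 * (2 * π) ^ β / β, ?_, ?_⟩
    · have t1 : 0 < 8 * π * c2 * (2 * π) ^ (β - 1) / (1 - β) := by
        apply div_pos (by positivity) (by linarith)
      have t2 : 0 < 4 * c2 * (2 * π) ^ β / β := by
        apply div_pos (by positivity) hβ0
      linarith
    intro s t
    rcases eq_or_ne s t with rfl | hst
    · simp [sub_self, Real.zero_rpow hβ0.ne']
    have hδ : 0 < |s - t| := abs_pos.mpr (sub_ne_zero.mpr hst)
    set δ : ℝ := |s - t| with hδdef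
    set R : ℝ := (2 * π * δ)⁻¹ with hRdef
    have hR0 : 0 < R := by rw [hRdef]; positivity
    set Fk : ℝ → ℂ := fun x => (-2 * ↑π * Complex.I * ↑x) ^ k • h x with hFkdef
    have hFkint : Integrable Fk := key k le_rfl
    have hFkeq : iteratedDeriv k f = 𝓕 Fk := hderiv k le_rfl
    set p : ℝ := (k : ℝ) - α - 1 with hpdef
    have hp1 : p < -1 := by rw [hpdef]; linarith
    have hp2 : (-1:ℝ) < p + 1 := by rw [hpdef]; linarith
    have hp_eq : p + 1 = -β := by rw [hpdef, hβdef]; ring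
    have hFknorm : ∀ x : ℝ, x ≠ 0 → ‖Fk x‖ ≤ c2 * |x| ^ p := by
      intro x hx
      have habs : (0:ℝ) < |x| := abs_pos.mpr hx
      have h1 : ‖Fk x‖ = (2 * π * |x|) ^ k * ‖h x‖ := by
        rw [hFkdef]
        rw [norm_smul, norm_pow]
        congr 2
        simp only [norm_mul, norm_neg, Complex.norm_I, Complex.norm_real, Real.norm_eq_abs,
          abs_of_pos Real.pi_pos]
        norm_num
      have e1 : |x| ^ (k:ℕ) * |x| ^ (-(α + 1)) = |x| ^ p := by
        rw [← Real.rpow_natCast |x| k, ← Real.rpow_add habs, hpdef]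
        congr 1; ring
      rw [h1]
      calc (2 * π * |x|) ^ k * ‖h x‖ ≤ (2 * π * |x|) ^ k * (c * |x| ^ (-(α + 1))) :=
            mul_le_mul_of_nonneg_left (hhd x hx) (by positivity)
        _ = (2 * π) ^ k * c * (|x| ^ (k:ℕ) * |x| ^ (-(α + 1))) := by rw [mul_pow]; ring
        _ = c2 * |x| ^ p := by rw [e1, hc2def]
    -- phase factor integrability
    have hph : ∀ w : ℝ, Integrable
        (fun v : ℝ => (Real.fourierChar (-(v * w)) : Circle) • Fk v) := by
      intro w
      have := (Real.fourierIntegral_convergent_iff (f := Fk) w).mpr hFkint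
      simpa [RCLike.inner_apply, starRingEnd_apply, mul_comm] using this
    -- difference as an integral
    have hsub : iteratedDeriv k f s - iteratedDeriv k f t
        = ∫ x : ℝ, (((Real.fourierChar (-(x * s)) : Circle) : ℂ)
            - ((Real.fourierChar (-(x * t)) : Circle) : ℂ)) * Fk x := by
      rw [hFkeq, Real.fourier_real_eq, Real.fourier_real_eq,
        ← integral_sub (hph s) (hph t)]
      congr 1
      funext x
      simp only [Circle.smul_def, smul_eq_mul, sub_mul]
    -- the dominating function
    set J : ℝ → ℝ := fun x => (min 2 (2 * (2 * π * (δ * |x|)))) * (c2 * |x| ^ p) with hJdef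
    have hJ0 : J 0 = 0 := by
      simp only [hJdef, abs_zero, mul_zero]
      norm_num
    have hJbound : ∀ x : ℝ,
        ‖(((Real.fourierChar (-(x * s)) : Circle) : ℂ)
            - ((Real.fourierChar (-(x * t)) : Circle) : ℂ)) * Fk x‖ ≤ J x := by
      intro x
      rcases eq_or_ne x 0 with rfl | hx
      · rw [hJ0]
        simp
      · rw [norm_mul]
        have habd : |(-(x * s)) - (-(x * t))| = |x| * δ := by
          rw [show -(x * s) - -(x * t) = x * (t - s) by ring, abs_mul, hδdef, abs_sub_comm t s]
        have hb1 : ‖((Real.fourierChar (-(x * s)) : Circle) : ℂ)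
            - ((Real.fourierChar (-(x * t)) : Circle) : ℂ)‖
            ≤ min 2 (2 * (2 * π * (δ * |x|))) := by
          refine (char_diff_le _ _).trans (le_of_eq ?_)
          rw [habd, show 2 * (2 * π * (|x| * δ)) = 2 * (2 * π * (δ * |x|)) by ring]
        exact mul_le_mul hb1 (hFknorm x hx) (norm_nonneg _)
          (le_min (by norm_num) (by positivity))
    -- integrability of J on the three pieces
    have hJmeas : AEStronglyMeasurable J volume := by
      have h1 : Measurable fun x : ℝ => min 2 (2 * (2 * π * (δ * |x|))) := by fun_prop
      have h2 : Measurable fun x : ℝ => c2 * |x| ^ p := by fun_prop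
      exact (h1.mul h2).aestronglyMeasurable
    have hJnonneg : ∀ x : ℝ, 0 ≤ J x := by
      intro x
      apply mul_nonneg (le_min (by norm_num) (by positivity)) (by positivity)
    have hJle2 : ∀ x : ℝ, J x ≤ 2 * c2 * |x| ^ p := by
      intro x
      rw [hJdef]
      calc (min 2 (2 * (2 * π * (δ * |x|)))) * (c2 * |x| ^ p)
          ≤ 2 * (c2 * |x| ^ p) :=
            mul_le_mul_of_nonneg_right (min_le_left _ _) (by positivity)
        _ = 2 * c2 * |x| ^ p := by ring
    have hJlin : ∀ x : ℝ, J x ≤ 4 * π * δ * c2 * |x| ^ (p + 1) := by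
      intro x
      rcases eq_or_ne x 0 with rfl | hx
      · rw [hJ0, abs_zero, Real.zero_rpow (by linarith : p + 1 ≠ 0), mul_zero]
      · have habs : (0:ℝ) < |x| := abs_pos.mpr hx
        rw [hJdef]
        calc (min 2 (2 * (2 * π * (δ * |x|)))) * (c2 * |x| ^ p)
            ≤ (2 * (2 * π * (δ * |x|))) * (c2 * |x| ^ p) :=
              mul_le_mul_of_nonneg_right (min_le_right _ _) (by positivity)
          _ = 4 * π * δ * c2 * (|x| ^ (1:ℝ) * |x| ^ p) := by rw [Real.rpow_one]; ring
          _ = 4 * π * δ * c2 * |x| ^ (p + 1) := by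
              rw [← Real.rpow_add habs]
              congr 2
              ring
    have hJint_1 : IntegrableOn J (Iic (-R)) := by
      refine Integrable.mono' ((integrableOn_abs_rpow_Iic hp1 hR0).const_mul (2 * c2))
        hJmeas.restrict ?_
      refine ae_of_all _ fun x => ?_
      rw [Real.norm_eq_abs, abs_of_nonneg (hJnonneg x)]
      exact hJle2 x
    have hJint_2 : IntegrableOn J (Ioc (-R) R) := by
      refine Integrable.mono' ((integrableOn_abs_rpow_Ioc hp2 hR0).const_mul (4 * π * δ * c2))
        hJmeas.restrict ?_
      refine ae_of_all _ fun x => ?_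
      rw [Real.norm_eq_abs, abs_of_nonneg (hJnonneg x)]
      exact hJlin x
    have hIOn3 : IntegrableOn (fun x : ℝ => |x| ^ p) (Ioi R) :=
      (integrableOn_Ioi_rpow_of_lt hp1 hR0).congr_fun
        (fun x hx => by rw [abs_of_pos (hR0.trans hx)]) measurableSet_Ioi
    have hJint_3 : IntegrableOn J (Ioi R) := by
      refine Integrable.mono' (hIOn3.const_mul (2 * c2)) hJmeas.restrict ?_
      refine ae_of_all _ fun x => ?_
      rw [Real.norm_eq_abs, abs_of_nonneg (hJnonneg x)]
      exact hJle2 x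
    have hsets : Iic (-R) ∪ Ioc (-R) R ∪ Ioi R = univ := by
      rw [Set.Iic_union_Ioc_eq_Iic (by linarith : -R ≤ R), Set.Iic_union_Ioi]
    have hJint : Integrable J := by
      rw [← integrableOn_univ, ← hsets]
      exact (hJint_1.union hJint_2).union hJint_3
    have hd1 : Disjoint (Iic (-R) ∪ Ioc (-R) R) (Ioi R) := by
      rw [Set.Iic_union_Ioc_eq_Iic (by linarith : -R ≤ R)]
      exact Set.Iic_disjoint_Ioi le_rfl
    have hsplit : ∫ x : ℝ, J x = (∫ x in Iic (-R), J x) + (∫ x in Ioc (-R) R, J x)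
        + (∫ x in Ioi R, J x) := by
      rw [← setIntegral_univ, ← hsets,
        setIntegral_union hd1 measurableSet_Ioi (hJint_1.union hJint_2) hJint_3,
        setIntegral_union (Set.Iic_disjoint_Ioc le_rfl) measurableSet_Ioc hJint_1 hJint_2]
    -- bounds on the three pieces
    have hval1 : ∫ x in Iic (-R), (2 * c2 * |x| ^ p) = 2 * c2 * (-R ^ (p + 1) / (p + 1)) := by
      rw [MeasureTheory.integral_const_mul, integral_abs_rpow_Iic hp1 hR0]
    have hb1' : ∫ x in Iic (-R), J x ≤ 2 * c2 * (-R ^ (p + 1) / (p + 1)) := by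
      rw [← hval1]
      exact setIntegral_mono_on hJint_1
        ((integrableOn_abs_rpow_Iic hp1 hR0).const_mul (2 * c2))
        measurableSet_Iic (fun x _ => hJle2 x)
    have hval2 : ∫ x in Ioc (-R) R, (4 * π * δ * c2 * |x| ^ (p + 1))
        = 4 * π * δ * c2 * (2 * (R ^ (p + 1 + 1) / (p + 1 + 1))) := by
      rw [MeasureTheory.integral_const_mul, integral_abs_rpow_Ioc hp2 hR0]
    have hb2' : ∫ x in Ioc (-R) R, J x
        ≤ 4 * π * δ * c2 * (2 * (R ^ (p + 1 + 1) / (p + 1 + 1))) := by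
      rw [← hval2]
      exact setIntegral_mono_on hJint_2
        ((integrableOn_abs_rpow_Ioc hp2 hR0).const_mul (4 * π * δ * c2))
        measurableSet_Ioc (fun x _ => hJlin x)
    have hval3 : ∫ x in Ioi R, (2 * c2 * |x| ^ p) = 2 * c2 * (-R ^ (p + 1) / (p + 1)) := by
      rw [MeasureTheory.integral_const_mul]
      congr 1
      rw [setIntegral_congr_fun measurableSet_Ioi
        (fun x hx => by rw [abs_of_pos (hR0.trans hx)] : EqOn _ (fun x : ℝ => x ^ p) _)]
      exact integral_Ioi_rpow_of_lt hp1 hR0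
    have hb3' : ∫ x in Ioi R, J x ≤ 2 * c2 * (-R ^ (p + 1) / (p + 1)) := by
      rw [← hval3]
      exact setIntegral_mono_on hJint_3 (hIOn3.const_mul (2 * c2))
        measurableSet_Ioi (fun x _ => hJle2 x)
    -- powers of R
    have h2πδ : (0:ℝ) < 2 * π * δ := by positivity
    have eR1 : R ^ (p + 1) = (2 * π) ^ β * δ ^ β := by
      rw [hp_eq, hRdef, Real.inv_rpow h2πδ.le, Real.rpow_neg h2πδ.le, inv_inv,
        Real.mul_rpow h2π.le hδ.le]
    have eR2 : R ^ (p + 1 + 1) = (2 * π) ^ (β - 1) * δ ^ (β - 1) := by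
      rw [show p + 1 + 1 = 1 - β by rw [hp_eq]; ring, hRdef, Real.inv_rpow h2πδ.le,
        ← Real.rpow_neg h2πδ.le, show -(1 - β) = β - 1 by ring,
        Real.mul_rpow h2π.le hδ.le]
    have eδ : δ * δ ^ (β - 1) = δ ^ β := by
      calc δ * δ ^ (β - 1) = δ ^ (1:ℝ) * δ ^ (β - 1) := by rw [Real.rpow_one]
        _ = δ ^ (1 + (β - 1)) := (Real.rpow_add hδ 1 (β - 1)).symm
        _ = δ ^ β := by ring_nf
    -- final computation
    have hfinal : 2 * c2 * (-R ^ (p + 1) / (p + 1))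
        + 4 * π * δ * c2 * (2 * (R ^ (p + 1 + 1) / (p + 1 + 1)))
        + 2 * c2 * (-R ^ (p + 1) / (p + 1))
        = (8 * π * c2 * (2 * π) ^ (β - 1) / (1 - β) + 4 * c2 * (2 * π) ^ β / β) * δ ^ β := by
      rw [eR1, eR2, hp_eq, show -β + 1 = 1 - β by ring]
      set a := (2 * π) ^ β
      set b := (2 * π) ^ (β - 1)
      set u := δ ^ β
      set v := δ ^ (β - 1)
      have hβne : β ≠ 0 := hβ0.ne'
      have h1βne : 1 - β ≠ 0 := by linarith
      rw [← eδ]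
      field_simp
      ring
    calc ‖iteratedDeriv k f s - iteratedDeriv k f t‖
        = ‖∫ x : ℝ, (((Real.fourierChar (-(x * s)) : Circle) : ℂ)
            - ((Real.fourierChar (-(x * t)) : Circle) : ℂ)) * Fk x‖ := by rw [hsub]
      _ ≤ ∫ x : ℝ, J x := norm_integral_le_of_norm_le hJint (ae_of_all _ hJbound)
      _ = (∫ x in Iic (-R), J x) + (∫ x in Ioc (-R) R, J x) + (∫ x in Ioi R, J x) := hsplit
      _ ≤ 2 * c2 * (-R ^ (p + 1) / (p + 1))
            + 4 * π * δ * c2 * (2 * (R ^ (p + 1 + 1) / (p + 1 + 1)))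
            + 2 * c2 * (-R ^ (p + 1) / (p + 1)) := by
          exact add_le_add (add_le_add hb1' hb2') hb3'
      _ = (8 * π * c2 * (2 * π) ^ (β - 1) / (1 - β) + 4 * c2 * (2 * π) ^ β / β) * δ ^ β :=
          hfinal
end

section
/- Let α ≥ 1 be an integer. Suppose f : ℝ → ℂ is continuous and integrable, and there is a constant C > 0 such that its Fourier transform f̂(ξ) = ∫_ℝ f(t) e^{−iξt} dt satisfies |f̂(ξ)| ≤ C/|ξ|^{α+1} for all ξ ≠ 0. Then f is (α−1) times continuously differentiable on ℝ, and there exists a constant A > 0 such that the Zygmund condition |f^{(α−1)}(t+h) − 2 f^{(α−1)}(t) + f^{(α−1)}(t−h)| ≤ A·h holds for all t ∈ ℝ and all h > 0; that is, f belongs to the Zygmund class Zyg(α, ℝ). -/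
open MeasureTheory Set Filter

open Real Complex FourierTransform

-- inverse square integrability on the outside of an interval
lemma aux_setEq {r : ℝ} : {x : ℝ | r < |x|} = Iio (-r) ∪ Ioi r := by
  ext x
  simp only [mem_setOf_eq, lt_abs, mem_union, mem_Iio, mem_Ioi]
  constructor
  · rintro (h | h)
    · exact Or.inr h
    · exact Or.inl (by linarith)
  · rintro (h | h)
    · exact Or.inr (by linarith)
    · exact Or.inl h

lemma aux_measurable {r : ℝ} : MeasurableSet {x : ℝ | r < |x|} := by
  rw [aux_setEq]; exact measurableSet_Iio.union measurableSet_Ioi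

lemma aux_invsq_Ioi {r : ℝ} (hr : 0 < r) :
    IntegrableOn (fun x : ℝ => 1 / x ^ 2) (Ioi r) := by
  refine (integrableOn_Ioi_rpow_of_lt (by norm_num : (-2:ℝ) < -1) hr).congr_fun
    (fun x hx => ?_) measurableSet_Ioi
  have : ((-2 : ℤ) : ℝ) = (-2 : ℝ) := by norm_num
  beta_reduce
  rw [← this, Real.rpow_intCast]
  simp [zpow_neg, zpow_two, sq]

lemma aux_integral_invsq_Ioi {r : ℝ} (hr : 0 < r) :
    ∫ x in Ioi r, 1 / x ^ 2 = 1 / r := by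
  have h1 : ∫ x in Ioi r, 1 / x ^ 2 = ∫ x in Ioi r, x ^ (-2 : ℝ) := by
    refine setIntegral_congr_fun measurableSet_Ioi (fun x hx => ?_)
    have : ((-2 : ℤ) : ℝ) = (-2 : ℝ) := by norm_num
    rw [← this, Real.rpow_intCast]
    simp [zpow_neg, zpow_two, sq]
  rw [h1, integral_Ioi_rpow_of_lt (by norm_num) hr]
  rw [show (-2 : ℝ) + 1 = -1 by norm_num, Real.rpow_neg_one]
  field_simp

lemma aux_invsq_Iio {r : ℝ} (hr : 0 < r) :
    IntegrableOn (fun x : ℝ => 1 / x ^ 2) (Iio (-r)) := by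
  have hpre : Iio (-r) = (Neg.neg : ℝ → ℝ) ⁻¹' (Ioi r) := by
    ext x; simp [lt_neg]
  have := (MeasurePreserving.integrableOn_comp_preimage
    (Measure.measurePreserving_neg (volume : Measure ℝ))
    (Homeomorph.neg ℝ).measurableEmbedding
    (f := fun x : ℝ => 1 / x ^ 2) (s := Ioi r)).2 (aux_invsq_Ioi hr)
  rw [hpre]
  refine this.congr_fun (fun x _ => ?_) (measurableSet_Ioi.preimage measurable_neg)
  simp [Function.comp]

lemma aux_integral_invsq_Iio {r : ℝ} (hr : 0 < r) :
    ∫ x in Iio (-r), 1 / x ^ 2 = 1 / r := by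
  rw [← integral_Iic_eq_integral_Iio, ← integral_comp_neg_Ioi]
  simp only [neg_sq]
  exact aux_integral_invsq_Ioi hr

lemma aux_invsq (c : ℝ) {r : ℝ} (hr : 0 < r) :
    IntegrableOn (fun x : ℝ => c * (1 / x ^ 2)) {x : ℝ | r < |x|} := by
  rw [aux_setEq]
  exact (((aux_invsq_Iio hr).union (aux_invsq_Ioi hr)).const_mul c)

lemma aux_integral_invsq (c : ℝ) {r : ℝ} (hr : 0 < r) :
    ∫ x in {x : ℝ | r < |x|}, c * (1 / x ^ 2) = c * (2 / r) := by
  rw [aux_setEq, integral_const_mul c,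
    setIntegral_union (by simp [disjoint_left]; intro a h1; linarith)
      measurableSet_Ioi (aux_invsq_Iio hr) (aux_invsq_Ioi hr),
    aux_integral_invsq_Iio hr, aux_integral_invsq_Ioi hr]
  ring


lemma fourierT_eq (f : ℝ → ℂ) (ξ : ℝ) : fourierT f ξ = 𝓕 f (ξ / (2 * π)) := by
  rw [Real.fourier_eq']
  simp only [RCLike.inner_apply, conj_trivial]
  unfold fourierT
  congr 1
  ext t
  rw [smul_eq_mul, mul_comm (Complex.exp _) (f t)]
  congr 1
  have hπ : (2 : ℝ) * π ≠ 0 := by positivity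
  have h1 : -2 * π * (ξ / (2 * π) * t) = -(ξ * t) := by
    field_simp
  rw [h1]
  push_cast
  ring

lemma fourier_eq_fourierT (f : ℝ → ℂ) (w : ℝ) : 𝓕 f w = fourierT f (2 * π * w) := by
  rw [fourierT_eq]
  congr 1
  field_simp

-- second-difference exponential factor
lemma combo_eq (τ θ : ℝ) :
    Complex.exp (↑(τ + θ) * Complex.I) - 2 * Complex.exp (↑τ * Complex.I) +
      Complex.exp (↑(τ - θ) * Complex.I) =
    Complex.exp (↑τ * Complex.I) *
      (Complex.exp (↑θ * Complex.I) - 2 + Complex.exp (↑(-θ) * Complex.I)) := by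
  rw [show ((τ + θ : ℝ) : ℂ) * Complex.I = ↑τ * Complex.I + ↑θ * Complex.I by push_cast; ring,
    show ((τ - θ : ℝ) : ℂ) * Complex.I = ↑τ * Complex.I + ↑(-θ) * Complex.I by push_cast; ring,
    Complex.exp_add, Complex.exp_add]
  ring

lemma combo_norm_le_four (θ : ℝ) :
    ‖Complex.exp (↑θ * Complex.I) - 2 + Complex.exp (↑(-θ) * Complex.I)‖ ≤ 4 := by
  calc ‖Complex.exp (↑θ * Complex.I) - 2 + Complex.exp (↑(-θ) * Complex.I)‖
      ≤ ‖Complex.exp (↑θ * Complex.I) - 2‖ + ‖Complex.exp (↑(-θ) * Complex.I)‖ := norm_add_le _ _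
    _ ≤ (‖Complex.exp (↑θ * Complex.I)‖ + ‖(2:ℂ)‖) + ‖Complex.exp (↑(-θ) * Complex.I)‖ := by
        gcongr; exact norm_sub_le _ _
    _ ≤ 4 := by
        simp only [Complex.norm_exp_ofReal_mul_I]
        norm_num

lemma combo_norm_le_sq {θ : ℝ} (hθ : |θ| ≤ 1) :
    ‖Complex.exp (↑θ * Complex.I) - 2 + Complex.exp (↑(-θ) * Complex.I)‖ ≤ 4 * θ ^ 2 := by
  have hQP : Complex.exp (↑(-θ) * Complex.I) * Complex.exp (↑θ * Complex.I) = 1 := by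
    rw [← Complex.exp_add, ← Complex.exp_zero]
    congr 1
    push_cast
    ring
  have hfac : Complex.exp (↑θ * Complex.I) - 2 + Complex.exp (↑(-θ) * Complex.I)
      = Complex.exp (↑(-θ) * Complex.I) * (Complex.exp (↑θ * Complex.I) - 1) ^ 2 := by
    have h : Complex.exp (↑(-θ) * Complex.I) * (Complex.exp (↑θ * Complex.I) - 1) ^ 2
        = (Complex.exp (↑(-θ) * Complex.I) * Complex.exp (↑θ * Complex.I)) *
            Complex.exp (↑θ * Complex.I)
          - 2 * (Complex.exp (↑(-θ) * Complex.I) * Complex.exp (↑θ * Complex.I))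
          + Complex.exp (↑(-θ) * Complex.I) := by ring
    rw [h, hQP]
    ring
  rw [hfac, norm_mul, norm_pow,
    Complex.norm_exp_ofReal_mul_I, one_mul]
  have habs : ‖(↑θ * Complex.I)‖ ≤ 1 := by
    rw [norm_mul, Complex.norm_real, Real.norm_eq_abs, Complex.norm_I, mul_one]
    exact hθ
  have h2 := Complex.norm_exp_sub_one_le habs
  rw [norm_mul, Complex.norm_real, Real.norm_eq_abs, Complex.norm_I, mul_one] at h2
  calc ‖(Complex.exp (↑θ * Complex.I) - 1)‖ ^ 2 ≤ (2 * |θ|) ^ 2 :=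
        pow_le_pow_left₀ (norm_nonneg _) h2 2
    _ = 4 * θ ^ 2 := by rw [mul_pow, _root_.sq_abs]; norm_num

/-- If `f : ℝ → ℂ` is continuous and integrable and its Fourier transform
decays like `C/|ξ|^{α+1}` for an integer `α ≥ 1`, then `f ∈ Zyg(α, ℝ)`:
`f` is `(α-1)` times continuously differentiable and `f^{(α-1)}` satisfies the
Zygmund condition `|g(t+h) - 2g(t) + g(t-h)| ≤ A·h`. -/
theorem fourier_decay_implies_Zyg
    (α : ℕ) (hα : 1 ≤ α)
    (f : ℝ → ℂ) (hfc : Continuous f) (hfi : Integrable f)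
    (C : ℝ) (hC : 0 < C)
    (hFT : ∀ ξ : ℝ, ξ ≠ 0 → ‖fourierT f ξ‖ ≤ C / |ξ| ^ ((α : ℝ) + 1)) :
    ContDiff ℝ (α - 1 : ℕ) f ∧
    ∃ A : ℝ, 0 < A ∧ ∀ t h : ℝ, 0 < h →
      ‖iteratedDeriv (α - 1) f (t + h) - 2 * iteratedDeriv (α - 1) f t +
        iteratedDeriv (α - 1) f (t - h)‖ ≤ A * h := by
  have hπ : (0:ℝ) < π := Real.pi_pos
  set n := α - 1 with hn
  have hα1 : α + 1 = n + 2 := by omega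
  set g := 𝓕 f with hgdef
  have hg_cont : Continuous g :=
    VectorFourier.fourierIntegral_continuous Real.continuous_fourierChar continuous_inner hfi
  -- decay of g with natural powers
  have hg_decay : ∀ v : ℝ, v ≠ 0 → ‖g v‖ ≤ C / (2 * π * |v|) ^ (α + 1) := by
    intro v hv
    have h2πv : (2 * π * v) ≠ 0 := mul_ne_zero (by positivity) hv
    have h1 : ‖fourierT f (2 * π * v)‖ ≤ C / |2 * π * v| ^ ((α:ℝ) + 1) := hFT _ h2πv
    have key : |2 * π * v| ^ ((α:ℝ) + 1) = (2 * π * |v|) ^ (α + 1) := by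
      rw [show ((α:ℝ) + 1) = ((α + 1 : ℕ) : ℝ) by push_cast; ring, Real.rpow_natCast,
        abs_mul, abs_of_pos (by positivity : (0:ℝ) < 2 * π)]
    rw [← fourier_eq_fourierT, key] at h1
    exact h1
  -- integrability of ‖v‖^k * ‖g v‖
  have hIntN : ∀ k : ℕ, (k : ℕ∞) ≤ (n : ℕ∞) → Integrable (fun v : ℝ => ‖v‖ ^ k * ‖g v‖) := by
    intro k hk
    have hkn : k ≤ n := by exact_mod_cast hk
    have hFcont : Continuous (fun v : ℝ => ‖v‖ ^ k * ‖g v‖) :=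
      (continuous_norm.pow k).mul hg_cont.norm
    have h1 : IntegrableOn (fun v : ℝ => ‖v‖ ^ k * ‖g v‖) (Icc (-1) 1) :=
      hFcont.integrableOn_Icc
    have h2 : IntegrableOn (fun v : ℝ => ‖v‖ ^ k * ‖g v‖) {x : ℝ | 1 < |x|} := by
      refine (aux_invsq C one_pos).mono' hFcont.aestronglyMeasurable.restrict ?_
      refine (ae_restrict_iff' aux_measurable).2 (ae_of_all _ fun x hx => ?_)
      have hx1 : 1 < |x| := hx
      have hx0 : x ≠ 0 := by
        intro h0
        rw [h0, abs_zero] at hx1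
        linarith
      have hxpos : (0:ℝ) < |x| := abs_pos.2 hx0
      rw [Real.norm_of_nonneg (by positivity), Real.norm_eq_abs]
      calc |x| ^ k * ‖g x‖ ≤ |x| ^ n * ‖g x‖ := by
            gcongr
            exact le_of_lt hx1
        _ ≤ |x| ^ n * (C / (2 * π * |x|) ^ (α + 1)) := by
            gcongr
            exact hg_decay x hx0
        _ ≤ |x| ^ n * (C / |x| ^ (α + 1)) := by
            gcongr
            have h2π : (1:ℝ) ≤ 2 * π := by nlinarith [Real.pi_gt_three]
            nlinarith [mul_le_mul_of_nonneg_right h2π (abs_nonneg x)]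
        _ = C * (1 / x ^ 2) := by
            rw [hα1, pow_add, _root_.sq_abs]
            field_simp
    have huniv : Icc (-1:ℝ) 1 ∪ {x : ℝ | 1 < |x|} = univ := by
      ext x
      simp only [mem_union, mem_Icc, mem_setOf_eq, mem_univ, iff_true]
      rcases le_or_gt (|x|) 1 with hx | hx
      · exact Or.inl ⟨neg_le_of_abs_le hx, le_of_abs_le hx⟩
      · exact Or.inr hx
    exact integrableOn_univ.1 (huniv ▸ h1.union h2)
  -- integrability of v^k • g v
  have hInt : ∀ k : ℕ, (k : ℕ∞) ≤ (n : ℕ∞) → Integrable (fun v : ℝ => v ^ k • g v) := by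
    intro k hk
    refine (hIntN k hk).mono' ((continuous_pow k).smul hg_cont).aestronglyMeasurable
      (ae_of_all _ fun v => le_of_eq ?_)
    rw [norm_smul, norm_pow]
  have hgint : Integrable g := by
    have := hInt 0 zero_le
    simpa using this
  -- Fourier inversion
  have hinv : ∀ x : ℝ, f x = 𝓕 g (-x) := by
    intro x
    conv_lhs => rw [← hfc.fourierInv_fourier_eq hfi hgint]
    exact Real.fourierInv_eq_fourier_neg g x
  have hfeq : f = fun x => 𝓕 g (-x) := funext hinv
  -- smoothness
  have hcd : ContDiff ℝ (n : ℕ∞) (𝓕 g) := Real.contDiff_fourier (fun k hk => hIntN k hk)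
  have hcdf : ContDiff ℝ (n : ℕ∞) f := by
    rw [hfeq]
    exact hcd.comp contDiff_neg
  refine ⟨hcdf, 3 * C, by positivity, ?_⟩
  -- iterated derivative formula
  have hGeq := Real.iteratedDeriv_fourier (f := g) (N := (n : ℕ∞)) (n := n) hInt le_rfl
  set G := fun x : ℝ => (-2 * ↑π * Complex.I * (x:ℂ)) ^ n • g x with hGdef
  have hGnorm : ∀ x : ℝ, ‖G x‖ = (2 * π * |x|) ^ n * ‖g x‖ := by
    intro x
    rw [hGdef]
    simp only [norm_smul, norm_pow]
    congr 2
    rw [norm_mul, norm_mul, norm_mul, norm_neg, Complex.norm_ofNat, Complex.norm_real,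
      Complex.norm_I, Complex.norm_real, Real.norm_eq_abs, Real.norm_eq_abs, abs_of_pos hπ, mul_one]
  have hGcont : Continuous G := by
    rw [hGdef]
    fun_prop
  have hGdecay : ∀ x : ℝ, x ≠ 0 → ‖G x‖ ≤ C / (2 * π * |x|) ^ 2 := by
    intro x hx
    have hxpos : (0:ℝ) < |x| := abs_pos.2 hx
    have hb : (0:ℝ) < 2 * π * |x| := by positivity
    rw [hGnorm]
    calc (2 * π * |x|) ^ n * ‖g x‖ ≤ (2 * π * |x|) ^ n * (C / (2 * π * |x|) ^ (α + 1)) := by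
          gcongr
          exact hg_decay x hx
      _ = C / (2 * π * |x|) ^ 2 := by
          rw [hα1, pow_add]
          field_simp
  have hGint : Integrable G := by
    refine ((hIntN n le_rfl).const_mul ((2 * π) ^ n)).mono' hGcont.aestronglyMeasurable
      (ae_of_all _ fun x => le_of_eq ?_)
    rw [hGnorm, Real.norm_eq_abs, mul_pow]
    ring
  have hitf : ∀ x : ℝ, iteratedDeriv n f x = (-1:ℝ) ^ n • 𝓕 G (-x) := by
    intro x
    rw [hfeq, iteratedDeriv_comp_neg, hGeq]
  -- main estimate
  intro t h hh
  set r := 1 / (2 * π * h) with hrdef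
  have hr : 0 < r := by rw [hrdef]; positivity
  have hFw : ∀ w : ℝ, 𝓕 G w = ∫ v : ℝ, Complex.exp (↑(-2 * π * (v * w)) * Complex.I) * G v := by
    intro w
    rw [Real.fourier_eq']
    simp only [RCLike.inner_apply, conj_trivial, smul_eq_mul]
    simp_rw [mul_comm w]
  have hci : ∀ w : ℝ, Integrable (fun v : ℝ =>
      Complex.exp (↑(-2 * π * (v * w)) * Complex.I) * G v) := by
    intro w
    refine hGint.norm.mono' (Continuous.aestronglyMeasurable (by fun_prop))
      (ae_of_all _ fun v => ?_)
    rw [norm_mul, Complex.norm_exp_ofReal_mul_I, one_mul]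
  set Φ := fun v : ℝ =>
      (Complex.exp (↑(-2 * π * (v * (-(t + h)))) * Complex.I)
        - 2 * Complex.exp (↑(-2 * π * (v * (-t))) * Complex.I)
        + Complex.exp (↑(-2 * π * (v * (-(t - h)))) * Complex.I)) * G v with hΦdef
  have hsub : Integrable (fun v : ℝ =>
      Complex.exp (↑(-2 * π * (v * (-(t + h)))) * Complex.I) * G v
        - 2 * (Complex.exp (↑(-2 * π * (v * (-t))) * Complex.I) * G v)) :=
    (hci (-(t + h))).sub ((hci (-t)).const_mul 2)
  have hΦint : Integrable Φ := by
    have h1 := hsub.add (hci (-(t - h)))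
    refine h1.congr (ae_of_all _ fun v => ?_)
    simp only [Pi.add_apply, Pi.sub_apply, hΦdef]
    ring
  have hT : 𝓕 G (-(t + h)) - 2 * 𝓕 G (-t) + 𝓕 G (-(t - h)) = ∫ v : ℝ, Φ v := by
    rw [hFw, hFw, hFw, ← integral_const_mul,
      ← integral_sub (hci (-(t + h))) ((hci (-t)).const_mul 2),
      ← integral_add hsub (hci (-(t - h)))]
    refine integral_congr_ae (ae_of_all _ fun v => ?_)
    rw [hΦdef]
    ring
  -- pointwise norm factorization
  have hΦnorm : ∀ v : ℝ, ‖Φ v‖ =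
      ‖Complex.exp (↑(2 * π * v * h) * Complex.I) - 2
        + Complex.exp (↑(-(2 * π * v * h)) * Complex.I)‖ * ‖G v‖ := by
    intro v
    rw [hΦdef]
    simp only
    rw [show -2 * π * (v * (-(t + h))) = (2 * π * v * t) + (2 * π * v * h) by ring,
      show -2 * π * (v * (-t)) = 2 * π * v * t by ring,
      show -2 * π * (v * (-(t - h))) = (2 * π * v * t) - (2 * π * v * h) by ring,
      combo_eq (2 * π * v * t) (2 * π * v * h), norm_mul, norm_mul,
      Complex.norm_exp_ofReal_mul_I, one_mul]
  -- bound on the inner interval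
  have hb1 : ∀ v ∈ Icc (-r) r, ‖Φ v‖ ≤ 4 * C * h ^ 2 := by
    intro v hv
    have hvr : |v| ≤ r := abs_le.2 ⟨hv.1, hv.2⟩
    by_cases hv0 : v = 0
    · rw [hΦnorm, hv0]
      norm_num
      positivity
    · have hvpos : (0:ℝ) < |v| := abs_pos.2 hv0
      have hθ : |2 * π * v * h| ≤ 1 := by
        have h1 : |2 * π * v * h| = (2 * π * h) * |v| := by
          rw [show 2 * π * v * h = (2 * π * h) * v by ring, abs_mul,
            abs_of_pos (by positivity : (0:ℝ) < 2 * π * h)]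
        have h2 : (2 * π * h) * |v| ≤ (2 * π * h) * r :=
          mul_le_mul_of_nonneg_left hvr (by positivity)
        have h3 : (2 * π * h) * r = 1 := by
          rw [hrdef]
          field_simp
        rw [h1]
        linarith
      rw [hΦnorm]
      calc ‖Complex.exp (↑(2 * π * v * h) * Complex.I) - 2
            + Complex.exp (↑(-(2 * π * v * h)) * Complex.I)‖ * ‖G v‖
          ≤ (4 * (2 * π * v * h) ^ 2) * (C / (2 * π * |v|) ^ 2) := by
            exact mul_le_mul (combo_norm_le_sq hθ) (hGdecay v hv0) (norm_nonneg _)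
              (by positivity)
        _ = 4 * C * h ^ 2 := by
            rw [mul_pow, mul_pow, mul_pow (2 * π) (|v|), _root_.sq_abs]
            field_simp
  -- bound outside
  have hb2 : ∀ v ∈ {x : ℝ | r < |x|}, ‖Φ v‖ ≤ (C / π ^ 2) * (1 / v ^ 2) := by
    intro v hv
    have hvr : r < |v| := hv
    have hv0 : v ≠ 0 := by
      intro h0; rw [h0] at hvr; simp at hvr; linarith
    have hvpos : (0:ℝ) < |v| := abs_pos.2 hv0
    rw [hΦnorm]
    calc ‖Complex.exp (↑(2 * π * v * h) * Complex.I) - 2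
          + Complex.exp (↑(-(2 * π * v * h)) * Complex.I)‖ * ‖G v‖
        ≤ 4 * (C / (2 * π * |v|) ^ 2) :=
          mul_le_mul (combo_norm_le_four _) (hGdecay v hv0) (norm_nonneg _) (by norm_num)
      _ = (C / π ^ 2) * (1 / v ^ 2) := by
          rw [mul_pow, mul_pow (2:ℝ) π, _root_.sq_abs]
          field_simp
          ring
  -- assemble
  rw [hitf, hitf, hitf]
  have hfactor : (-1:ℝ) ^ n • 𝓕 G (-(t + h)) - 2 * ((-1:ℝ) ^ n • 𝓕 G (-t))
      + (-1:ℝ) ^ n • 𝓕 G (-(t - h))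
      = (-1:ℝ) ^ n • (𝓕 G (-(t + h)) - 2 * 𝓕 G (-t) + 𝓕 G (-(t - h))) := by
    rw [smul_add, smul_sub, mul_smul_comm]
  rw [hfactor, norm_smul]
  simp only [norm_pow, norm_neg, norm_one, one_pow, one_mul]
  rw [hT]
  have hΦnormint : Integrable (fun v : ℝ => ‖Φ v‖) := hΦint.norm
  have hcompl : (Icc (-r) r)ᶜ = {x : ℝ | r < |x|} := by
    ext x
    simp only [mem_compl_iff, mem_Icc, not_and_or, not_le, mem_setOf_eq, lt_abs]
    constructor
    · rintro (h1 | h1)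
      · exact Or.inr (by linarith)
      · exact Or.inl h1
    · rintro (h1 | h1)
      · exact Or.inr h1
      · exact Or.inl (by linarith)
  have hsplit : ∫ v : ℝ, ‖Φ v‖ = (∫ v in Icc (-r) r, ‖Φ v‖)
      + ∫ v in {x : ℝ | r < |x|}, ‖Φ v‖ := by
    rw [← hcompl, integral_add_compl measurableSet_Icc hΦnormint]
  calc ‖∫ v : ℝ, Φ v‖ ≤ ∫ v : ℝ, ‖Φ v‖ := norm_integral_le_integral_norm _
    _ = (∫ v in Icc (-r) r, ‖Φ v‖) + ∫ v in {x : ℝ | r < |x|}, ‖Φ v‖ := hsplit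
    _ ≤ (2 * r) * (4 * C * h ^ 2) + (C / π ^ 2) * (2 / r) := by
        gcongr
        · calc (∫ v in Icc (-r) r, ‖Φ v‖) ≤ ∫ _ in Icc (-r) r, 4 * C * h ^ 2 :=
                setIntegral_mono_on hΦnormint.integrableOn
                  (integrableOn_const measure_Icc_lt_top.ne) measurableSet_Icc hb1
            _ = (2 * r) * (4 * C * h ^ 2) := by
                rw [setIntegral_const, Measure.real, Real.volume_Icc, smul_eq_mul,
                  ENNReal.toReal_ofReal (by linarith)]
                ring_nf
        · calc (∫ v in {x : ℝ | r < |x|}, ‖Φ v‖)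
              ≤ ∫ v in {x : ℝ | r < |x|}, (C / π ^ 2) * (1 / v ^ 2) :=
                setIntegral_mono_on hΦnormint.integrableOn (aux_invsq (C / π ^ 2) hr)
                  aux_measurable hb2
            _ = (C / π ^ 2) * (2 / r) := aux_integral_invsq (C / π ^ 2) hr
    _ ≤ 3 * C * h := by
        have hre : (2 * r) * (4 * C * h ^ 2) + (C / π ^ 2) * (2 / r) = 8 * C * h / π := by
          rw [hrdef]
          field_simp
          ring
        rw [hre, div_le_iff₀ hπ]
        nlinarith [Real.pi_gt_three, mul_pos hC hh,
          mul_le_mul_of_nonneg_left Real.pi_gt_three.le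
            (by positivity : (0:ℝ) ≤ 3 * C * h)]
end

section
/- Let ℓ ≥ −1/2 be a real number, let p ≥ 1 be an integer and C > 0. Let (a_n)_{n≥1} be a sequence of nonnegative real numbers such that ∑_{n=N+1}^{∞} a_n²/n ≤ C/N^{2ℓ+2p+2} for every integer N ≥ 1. Then there exists a constant C′ > 0, depending only on ℓ, p and C, such that ∑_{n=N+1}^{∞} a_n² · n^{2ℓ+1} ≤ C′/N^{2p} for every integer N ≥ 1. -/
open MeasureTheory Set Filter

/-- dyadic summation estimate. If `a_n ≥ 0` and
`∑_{n=N+1}^∞ a_n²/n ≤ C/N^{2ℓ+2p+2}` for all `N ≥ 1`, then there is `C' > 0`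
(depending only on `ℓ, p, C`) with `∑_{n=N+1}^∞ a_n² n^{2ℓ+1} ≤ C'/N^{2p}` for all `N ≥ 1`. -/
theorem dyadic_weighted_tail_estimate
    (l : ℝ) (hl : -(1/2 : ℝ) ≤ l) (p : ℕ) (hp : 1 ≤ p) (C : ℝ) (hC : 0 < C)
    (a : ℕ → ℝ) (ha : ∀ n, 0 ≤ a n)
    (htail : ∀ N : ℕ, 1 ≤ N →
      ∑' n : ℕ, ENNReal.ofReal ((a (N + 1 + n)) ^ 2 / ((N : ℝ) + 1 + n)) ≤
        ENNReal.ofReal (C / (N : ℝ) ^ (2 * l + 2 * (p : ℝ) + 2))) :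
    ∃ C' : ℝ, 0 < C' ∧ ∀ N : ℕ, 1 ≤ N →
      ∑' n : ℕ, ENNReal.ofReal ((a (N + 1 + n)) ^ 2 * ((N : ℝ) + 1 + n) ^ (2 * l + 1)) ≤
        ENNReal.ofReal (C' / (N : ℝ) ^ (2 * p)) := by
  classical
  set b : ℕ → ℝ := fun n => (a n) ^ 2 / n with hbdef
  set g : ℕ → ℝ := fun n => (a n) ^ 2 * (n : ℝ) ^ (2 * l + 1) with hgdef
  have hb0 : ∀ n, 0 ≤ b n := fun n => div_nonneg (sq_nonneg _) (Nat.cast_nonneg n)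
  have hg0 : ∀ n, 0 ≤ g n := fun n =>
    mul_nonneg (sq_nonneg _) (Real.rpow_nonneg (Nat.cast_nonneg n) _)
  have reindex : ∀ (f : ℕ → ℝ) (A M : ℕ),
      ∑ n ∈ Finset.Ioc A M, f n = ∑ i ∈ Finset.range (M - A), f (A + 1 + i) := by
    intro f A M
    rw [← Finset.Ico_add_one_add_one_eq_Ioc, Finset.sum_Ico_eq_sum_range]
    simp [Nat.succ_sub_succ]
  -- real-valued tail hypothesis for finite sums
  have H : ∀ A : ℕ, 1 ≤ A → ∀ M : ℕ,
      ∑ n ∈ Finset.Ioc A M, b n ≤ C / (A : ℝ) ^ (2 * l + 2 * (p : ℝ) + 2) := by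
    intro A hA M
    have hRHS : 0 ≤ C / (A : ℝ) ^ (2 * l + 2 * (p : ℝ) + 2) :=
      div_nonneg hC.le (Real.rpow_nonneg (Nat.cast_nonneg A) _)
    rw [reindex]
    rw [← ENNReal.ofReal_le_ofReal_iff hRHS]
    rw [ENNReal.ofReal_sum_of_nonneg (fun i _ => hb0 _)]
    refine le_trans ?_ (htail A hA)
    refine le_trans (le_of_eq ?_) (ENNReal.sum_le_tsum (Finset.range (M - A)))
    refine Finset.sum_congr rfl fun i _ => ?_
    congr 1
    simp only [hbdef]
    push_cast
    ring_nf
  set D : ℝ := C * (2 : ℝ) ^ (2 * l + 2) with hDdef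
  have hD0 : 0 < D := mul_pos hC (Real.rpow_pos_of_pos two_pos _)
  -- block estimate
  have block : ∀ A : ℕ, 1 ≤ A →
      ∑ n ∈ Finset.Ioc A (2 * A), g n ≤ D / (A : ℝ) ^ (2 * p) := by
    intro A hA
    have hA0 : (0 : ℝ) < A := by exact_mod_cast hA
    have hexp : (0 : ℝ) ≤ 2 * l + 2 := by linarith
    have step1 : ∀ n ∈ Finset.Ioc A (2 * A), g n ≤ b n * ((2 * A : ℕ) : ℝ) ^ (2 * l + 2) := by
      intro n hn
      obtain ⟨hn1, hn2⟩ := Finset.mem_Ioc.mp hn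
      have hn0 : (0 : ℝ) < n := by
        have : 1 ≤ n := le_trans hA hn1.le
        exact_mod_cast this
      have hgn : g n = b n * (n : ℝ) ^ (2 * l + 2) := by
        have h1 : (n : ℝ) ^ (2 * l + 2) = (n : ℝ) ^ (2 * l + 1) * n := by
          rw [← Real.rpow_add_one hn0.ne']
          ring_nf
        simp only [hgdef, hbdef, h1]
        field_simp
      rw [hgn]
      refine mul_le_mul_of_nonneg_left ?_ (hb0 n)
      exact Real.rpow_le_rpow hn0.le (by exact_mod_cast hn2) hexp
    have hsum2 : ∑ n ∈ Finset.Ioc A (2 * A), g n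
        ≤ (∑ n ∈ Finset.Ioc A (2 * A), b n) * ((2 * A : ℕ) : ℝ) ^ (2 * l + 2) := by
      rw [Finset.sum_mul]
      exact Finset.sum_le_sum step1
    have hsum3 : (∑ n ∈ Finset.Ioc A (2 * A), b n) * ((2 * A : ℕ) : ℝ) ^ (2 * l + 2)
        ≤ (C / (A : ℝ) ^ (2 * l + 2 * (p : ℝ) + 2)) * ((2 * A : ℕ) : ℝ) ^ (2 * l + 2) :=
      mul_le_mul_of_nonneg_right (H A hA (2 * A)) (Real.rpow_nonneg (Nat.cast_nonneg _) _)
    have halg : (C / (A : ℝ) ^ (2 * l + 2 * (p : ℝ) + 2)) * ((2 * A : ℕ) : ℝ) ^ (2 * l + 2)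
        = D / (A : ℝ) ^ (2 * p) := by
      have e1 : ((2 * A : ℕ) : ℝ) ^ (2 * l + 2) = (2 : ℝ) ^ (2 * l + 2) * (A : ℝ) ^ (2 * l + 2) := by
        push_cast
        rw [Real.mul_rpow (by norm_num) hA0.le]
      have eexp : (2 * l + 2 * (p : ℝ) + 2) = (2 * l + 2) + ((2 * p : ℕ) : ℝ) := by
        push_cast; ring
      have e2 : (A : ℝ) ^ (2 * l + 2 * (p : ℝ) + 2)
          = (A : ℝ) ^ (2 * l + 2) * (A : ℝ) ^ (2 * p) := by
        rw [eexp, Real.rpow_add hA0, Real.rpow_natCast]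
      rw [e1, e2, hDdef]
      have h1 : (A : ℝ) ^ (2 * l + 2) ≠ 0 := (Real.rpow_pos_of_pos hA0 _).ne'
      have h2 : ((A : ℝ)) ^ (2 * p) ≠ 0 := (pow_pos hA0 _).ne'
      field_simp
    calc ∑ n ∈ Finset.Ioc A (2 * A), g n
        ≤ (C / (A : ℝ) ^ (2 * l + 2 * (p : ℝ) + 2)) * ((2 * A : ℕ) : ℝ) ^ (2 * l + 2) :=
          le_trans hsum2 hsum3
      _ = D / (A : ℝ) ^ (2 * p) := halg
  -- dyadic induction
  have ind : ∀ (K N : ℕ), 1 ≤ N →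
      ∑ n ∈ Finset.Ioc N (2 ^ K * N), g n
        ≤ (2 - 2 * (1 / 2 : ℝ) ^ K) * (D / (N : ℝ) ^ (2 * p)) := by
    intro K
    induction K with
    | zero => intro N hN; simp
    | succ K ih =>
      intro N hN
      have hN0 : (0 : ℝ) < N := by exact_mod_cast hN
      have hA1 : 1 ≤ 2 ^ K * N := Nat.one_le_iff_ne_zero.mpr (by positivity)
      have h1 : N ≤ 2 ^ K * N := Nat.le_mul_of_pos_left N (Nat.pow_pos (by norm_num))
      have h2 : 2 ^ K * N ≤ 2 ^ (K + 1) * N :=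
        Nat.mul_le_mul_right N (Nat.pow_le_pow_right (by norm_num) (Nat.le_succ K))
      rw [← Finset.sum_Ioc_consecutive g h1 h2]
      have heq : 2 ^ (K + 1) * N = 2 * (2 ^ K * N) := by ring
      have hblock : ∑ n ∈ Finset.Ioc (2 ^ K * N) (2 ^ (K + 1) * N), g n
          ≤ D / ((2 ^ K * N : ℕ) : ℝ) ^ (2 * p) := by
        rw [heq]; exact block _ hA1
      have hbound2 : D / ((2 ^ K * N : ℕ) : ℝ) ^ (2 * p)
          ≤ (1 / 2 : ℝ) ^ K * (D / (N : ℝ) ^ (2 * p)) := by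
        have hge : (2 : ℝ) ^ K * (N : ℝ) ^ (2 * p) ≤ ((2 ^ K * N : ℕ) : ℝ) ^ (2 * p) := by
          have hcast : ((2 ^ K * N : ℕ) : ℝ) ^ (2 * p) = ((2 : ℝ) ^ K) ^ (2 * p) * (N : ℝ) ^ (2 * p) := by
            push_cast; ring
          rw [hcast]
          refine mul_le_mul_of_nonneg_right ?_ (pow_nonneg hN0.le _)
          exact le_self_pow₀ (one_le_pow₀ one_le_two) (by omega)
        have hpos : (0 : ℝ) < (2 : ℝ) ^ K * (N : ℝ) ^ (2 * p) := by positivity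
        calc D / ((2 ^ K * N : ℕ) : ℝ) ^ (2 * p)
            ≤ D / ((2 : ℝ) ^ K * (N : ℝ) ^ (2 * p)) := by gcongr
          _ = (1 / 2 : ℝ) ^ K * (D / (N : ℝ) ^ (2 * p)) := by
              rw [div_pow, one_pow]
              field_simp
      have hih := ih N hN
      have hhalf : (1 / 2 : ℝ) ^ (K + 1) = (1 / 2) * (1 / 2 : ℝ) ^ K := by ring
      have : (2 - 2 * (1 / 2 : ℝ) ^ K) * (D / (N : ℝ) ^ (2 * p))
          + (1 / 2 : ℝ) ^ K * (D / (N : ℝ) ^ (2 * p))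
          = (2 - 2 * (1 / 2 : ℝ) ^ (K + 1)) * (D / (N : ℝ) ^ (2 * p)) := by
        rw [hhalf]; ring
      linarith [hih, le_trans hblock hbound2]
  -- real conclusion for finite sums
  have G : ∀ N : ℕ, 1 ≤ N → ∀ M : ℕ,
      ∑ n ∈ Finset.Ioc N M, g n ≤ 2 * D / (N : ℝ) ^ (2 * p) := by
    intro N hN M
    have hN0 : (0 : ℝ) < N := by exact_mod_cast hN
    have hsub : Finset.Ioc N M ⊆ Finset.Ioc N (2 ^ M * N) := by
      apply Finset.Ioc_subset_Ioc_right
      calc M ≤ 2 ^ M := (Nat.lt_two_pow_self (n := M)).le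
        _ ≤ 2 ^ M * N := Nat.le_mul_of_pos_right _ hN
    have h1 : ∑ n ∈ Finset.Ioc N M, g n ≤ ∑ n ∈ Finset.Ioc N (2 ^ M * N), g n :=
      Finset.sum_le_sum_of_subset_of_nonneg hsub (fun i _ _ => hg0 i)
    have h2 := ind M N hN
    have h3 : (2 - 2 * (1 / 2 : ℝ) ^ M) * (D / (N : ℝ) ^ (2 * p))
        ≤ 2 * D / (N : ℝ) ^ (2 * p) := by
      have hx : (0 : ℝ) ≤ (1 / 2 : ℝ) ^ M := by positivity
      have hy : (0 : ℝ) ≤ D / (N : ℝ) ^ (2 * p) := by positivity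
      have h4 : 2 * D / (N : ℝ) ^ (2 * p) = 2 * (D / (N : ℝ) ^ (2 * p)) := by ring
      rw [h4]
      nlinarith [mul_nonneg hx hy]
    linarith
  refine ⟨2 * D, by positivity, ?_⟩
  intro N hN
  have hN0 : (0 : ℝ) < N := by exact_mod_cast hN
  have hRHS0 : (0 : ℝ) ≤ 2 * D / (N : ℝ) ^ (2 * p) := by positivity
  rw [ENNReal.tsum_eq_iSup_sum' _ Finset.exists_nat_subset_range]
  refine iSup_le fun M => ?_
  rw [← ENNReal.ofReal_sum_of_nonneg (fun i _ =>
    mul_nonneg (sq_nonneg _) (Real.rpow_nonneg (by positivity) _))]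
  apply ENNReal.ofReal_le_ofReal
  have hsum : ∑ i ∈ Finset.range M, (a (N + 1 + i)) ^ 2 * ((N : ℝ) + 1 + i) ^ (2 * l + 1)
      = ∑ n ∈ Finset.Ioc N (N + M), g n := by
    rw [reindex g N (N + M)]
    simp only [Nat.add_sub_cancel_left]
    refine Finset.sum_congr rfl fun i _ => ?_
    simp only [hgdef]
    congr 1
    push_cast
    ring_nf
  rw [hsum]
  exact G N hN (N + M)
end
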